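/- Let E be a directed graph. The collection of compact open invariant subsets of the unit space of the graph groupoid G_E satisfies the descending chain condition: every decreasing chain of compact open invariant subsets stabilizes. Moreover, every nonempty compact open invariant subset contains a minimal compact open invariant subset. -/

import Mathlib

/-- A directed graph: vertices, edges, source and range maps. -/
structure EGraph where
  V : Type
  E : Type
  s : E → V
  r : E → V

/-- A walk: a candidate finite path, given by a source vertex and a list of edges. -/
structure Walk (G : EGraph) where
  src : G.V
  edges : List G.E

/-- The range (final vertex) of a walk. -/
def Walk.rng {G : EGraph} (p : Walk G) : G.V :=
  match p.edges.getLast? with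
  | none => p.src
  | some e => G.r e

/-- Appending two walks. -/
def Walk.append {G : EGraph} (p q : Walk G) : Walk G := ⟨p.src, p.edges ++ q.edges⟩

/-- The `n`-fold power of a walk (concatenation with itself). -/
def Walk.pow {G : EGraph} (c : Walk G) (n : ℕ) : Walk G :=
  ⟨c.src, (List.replicate n c.edges).flatten⟩

namespace EGraph
variable (G : EGraph)

/-- A walk is a genuine finite path: the first edge starts at the source and
consecutive edges match up. -/
def IsPath (p : Walk G) : Prop :=
  (∀ e, p.edges.head? = some e → G.s e = p.src) ∧
    p.edges.Chain' (fun a b => G.r a = G.s b)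

/-- A subset of vertices is hereditary. -/
def Hereditary (H : Set G.V) : Prop :=
  ∀ p : Walk G, G.IsPath p → p.src ∈ H → p.rng ∈ H

/-- A regular vertex: emits at least one and finitely many edges. -/
def Regular (v : G.V) : Prop :=
  {e | G.s e = v}.Finite ∧ {e | G.s e = v}.Nonempty

/-- A subset of vertices is saturated. -/
def Saturated (H : Set G.V) : Prop :=
  ∀ v, G.Regular v → (∀ e, G.s e = v → G.r e ∈ H) → v ∈ H

/-- The saturated closure: the smallest hereditary and saturated set containing `H`. -/
def satClosure (H : Set G.V) : Set G.V :=
  ⋂₀ {K | H ⊆ K ∧ G.Hereditary K ∧ G.Saturated K}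

/-- The set of vertices of a walk (sources of its edges). -/
def verts (c : Walk G) : Set G.V := {v | ∃ e ∈ c.edges, G.s e = v}

/-- A cycle: a nontrivial closed path with no repeated vertices except the base. -/
def IsCycle (c : Walk G) : Prop :=
  G.IsPath c ∧ c.edges ≠ [] ∧ c.rng = c.src ∧ (c.edges.map G.s).Nodup

/-- A cycle (or walk) has no exits: each vertex on it emits only the edge of the walk. -/
def NoExits (c : Walk G) : Prop :=
  ∀ e ∈ c.edges, ∀ e', G.s e' = G.s e → e' = e

/-- `F_E(H)`: paths reaching `H` exactly at their final vertex. -/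
def FE (H : Set G.V) : Set (Walk G) :=
  {α | G.IsPath α ∧ α.edges ≠ [] ∧ α.src ∉ H ∧
       (∀ e ∈ α.edges.dropLast, G.r e ∉ H) ∧ α.rng ∈ H}

/-- The breaking vertices of `H`. -/
def BH (H : Set G.V) : Set G.V :=
  {v | v ∉ H ∧ {e | G.s e = v}.Infinite ∧
       {e | G.s e = v ∧ G.r e ∉ H}.Nonempty ∧ {e | G.s e = v ∧ G.r e ∉ H}.Finite}

/-- `F_E'(H)`: members of `F_E(H)` whose last edge has source not a breaking vertex. -/
def FE' (H : Set G.V) : Set (Walk G) :=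
  {α | α ∈ G.FE H ∧ ∀ e, α.edges.getLast? = some e → G.s e ∉ G.BH H}

/-- Condition (F): `H ∪ F_E'(H) ∪ {α ∈ Path(E) : r(α) ∈ B_H}` is finite. -/
def ConditionF (H : Set G.V) : Prop :=
  H.Finite ∧ (G.FE' H).Finite ∧ {α : Walk G | G.IsPath α ∧ α.rng ∈ G.BH H}.Finite

/-- An infinite path, given by its sequence of edges. -/
def IsInfPath (x : ℕ → G.E) : Prop := ∀ i, G.r (x i) = G.s (x (i + 1))

/-- The edge sequence of the concatenation of a finite walk with an infinite edge sequence. -/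
def concatSeq (p : Walk G) (x : ℕ → G.E) : ℕ → G.E := fun n =>
  if h : n < p.edges.length then p.edges.get ⟨n, h⟩ else x (n - p.edges.length)

end EGraph

namespace EGraph
variable (G : EGraph)

/-- A generalized path: either a finite walk or an infinite edge sequence. -/
def BP : Type := Walk G ⊕ (ℕ → G.E)

/-- Source of a generalized path. -/
def bsrc : G.BP → G.V
  | .inl α => α.src
  | .inr x => G.s (x 0)

/-- A sink: a vertex emitting no edges. -/
def IsSink (v : G.V) : Prop := ∀ e, G.s e ≠ v

/-- An infinite emitter. -/
def InfEmitter (v : G.V) : Prop := {e | G.s e = v}.Infinite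

/-- A boundary path: an infinite path, or a finite path ending at a sink or an
infinite emitter. -/
def IsBoundary : G.BP → Prop
  | .inl α => G.IsPath α ∧ (G.IsSink α.rng ∨ G.InfEmitter α.rng)
  | .inr x => G.IsInfPath x

/-- The boundary path space `X` of the graph. -/
def XB : Type := {p : G.BP // G.IsBoundary p}

/-- The set of generalized paths extending a finite walk `μ`. -/
def extends' (μ : Walk G) : Set G.BP :=
  {p | G.bsrc p = μ.src ∧ (match p with
    | .inl α => μ.edges <+: α.edges
    | .inr x => List.ofFn (fun i : Fin μ.edges.length => x i) = μ.edges)}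

/-- The cylinder set `Z(μ)` in the boundary path space. -/
def Zset (μ : Walk G) : Set G.XB := {x | x.1 ∈ G.extends' μ}

/-- The basic set `Z(μ ∖ F)`. -/
def Zminus (μ : Walk G) (F : Set G.E) : Set G.XB :=
  G.Zset μ \ ⋃ e ∈ F, G.Zset ⟨μ.src, μ.edges ++ [e]⟩

/-- The cylinder-set topology on the boundary path space. -/
instance XBtop : TopologicalSpace G.XB :=
  TopologicalSpace.generateFrom
    {S | ∃ (μ : Walk G) (F : Set G.E), G.IsPath μ ∧ F.Finite ∧
          (∀ e ∈ F, G.s e = μ.rng) ∧ S = G.Zminus μ F}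

/-- `e` is an edge occurring in a generalized path. -/
def edgeOf (e : G.E) : G.BP → Prop
  | .inl α => e ∈ α.edges
  | .inr x => ∃ i, x i = e

/-- `U_H`: boundary paths visiting `H` (with `r(x₀) := s(x)`). -/
def UH (H : Set G.V) : Set G.XB :=
  {x | G.bsrc x.1 ∈ H ∨ ∃ e, G.edgeOf e x.1 ∧ G.r e ∈ H}

/-- `U_S`: finite boundary paths with range in `S`. -/
def US (S : Set G.V) : Set G.XB :=
  {x | ∃ α : Walk G, x.1 = Sum.inl α ∧ α.rng ∈ S}

/-- `U_{H,S} = U_H ⊔ U_S`. -/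
def UHS (H S : Set G.V) : Set G.XB := G.UH H ∪ G.US S

/-- `F_α`: the edges emitted by `r(α)` with range outside `H`. -/
def Falpha (H : Set G.V) (α : Walk G) : Set G.E :=
  {e | G.s e = α.rng ∧ G.r e ∉ H}

/-- Concatenation of a finite walk with a generalized path. -/
def concatBP (μ : Walk G) : G.BP → G.BP
  | .inl α => .inl ⟨μ.src, μ.edges ++ α.edges⟩
  | .inr x => .inr (G.concatSeq μ x)

/-- Tail equivalence on the boundary path space: the equivalence induced by the graph
groupoid `G_E` on its unit space `X`. -/
def TailEquiv (x y : G.XB) : Prop :=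
  ∃ (μ ν : Walk G) (t : G.BP), G.IsPath μ ∧ G.IsPath ν ∧
    μ.rng = G.bsrc t ∧ ν.rng = G.bsrc t ∧
    x.1 = G.concatBP μ t ∧ y.1 = G.concatBP ν t

/-- Invariance of a subset of the unit space of the graph groupoid. -/
def InvariantX (U : Set G.XB) : Prop :=
  ∀ x y, G.TailEquiv x y → x ∈ U → y ∈ U

/-- Compact open invariant subsets of the unit space of the graph groupoid. -/
def COI (U : Set G.XB) : Prop := IsCompact U ∧ IsOpen U ∧ G.InvariantX U

/-- Minimal compact open invariant subsets. -/
def MinCOI (U : Set G.XB) : Prop :=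
  G.COI U ∧ U.Nonempty ∧ ∀ W, G.COI W → W ⊆ U → W = ∅ ∨ W = U

end EGraph

namespace EGraph
variable {G : EGraph}

/-! ### Elementary lemmas about walks and paths -/

lemma isPath_nil (v : G.V) : G.IsPath ⟨v, []⟩ :=
  ⟨fun e h => by simp [List.head?] at h, List.isChain_nil⟩

lemma rng_nil (v : G.V) : Walk.rng (⟨v, []⟩ : Walk G) = v := rfl

/-- The edge of a generalized path at position `n`, if any. -/
def eAt : G.BP → ℕ → Option G.E
  | .inl α, n => α.edges[n]?
  | .inr ξ, n => some (ξ n)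

lemma mem_extends_iff (μ : Walk G) (p : G.BP) :
    p ∈ G.extends' μ ↔ G.bsrc p = μ.src ∧
      ∀ i (h : i < μ.edges.length), eAt p i = some (μ.edges[i]'h) := by
  cases p with
  | inl α =>
    show (G.bsrc (Sum.inl α) = μ.src ∧ μ.edges <+: α.edges) ↔ _
    constructor
    · rintro ⟨hb, hpre⟩
      refine ⟨hb, fun i hi => ?_⟩
      have hil : i < α.edges.length := lt_of_lt_of_le hi hpre.length_le
      show α.edges[i]? = some (μ.edges[i]'hi)
      rw [List.getElem?_eq_getElem hil, hpre.getElem hi]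
    · rintro ⟨hb, hp⟩
      refine ⟨hb, ?_⟩
      have hlen : μ.edges.length ≤ α.edges.length := by
        by_contra hcon
        push_neg at hcon
        have h2 := hp α.edges.length hcon
        show False
        have : eAt (Sum.inl α : G.BP) α.edges.length = none := by
          show α.edges[α.edges.length]? = none
          exact List.getElem?_eq_none le_rfl
        rw [this] at h2
        exact nomatch h2
      rw [List.prefix_iff_eq_take]
      apply List.ext_getElem
      · simp [Nat.min_eq_left hlen]
      · intro i h1 h2
        have h3 : i < α.edges.length := lt_of_lt_of_le h1 hlen
        have h4 := hp i h1
        have h5 : eAt (Sum.inl α : G.BP) i = some (α.edges[i]'h3) := by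
          show α.edges[i]? = _
          exact List.getElem?_eq_getElem h3
        rw [h5] at h4
        simp only [List.getElem_take]
        exact Option.some.inj h4.symm
  | inr ξ =>
    show (G.bsrc (Sum.inr ξ) = μ.src ∧
        List.ofFn (fun i : Fin μ.edges.length => ξ i) = μ.edges) ↔ _
    constructor
    · rintro ⟨hb, hof⟩
      refine ⟨hb, fun i hi => ?_⟩
      have := congrArg (fun l => l[i]?) hof
      rw [List.getElem?_eq_getElem (by simpa using hi), List.getElem?_eq_getElem hi] at this
      simp only [List.getElem_ofFn] at this
      exact congrArg some (Option.some.inj this)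
    · rintro ⟨hb, hp⟩
      refine ⟨hb, ?_⟩
      apply List.ext_getElem (by simp)
      intro i h1 h2
      have h4 := hp i h2
      simp only [List.getElem_ofFn]
      exact Option.some.inj h4

lemma mem_Zset_iff {μ : Walk G} {x : G.XB} :
    x ∈ G.Zset μ ↔ G.bsrc x.1 = μ.src ∧
      ∀ i (h : i < μ.edges.length), eAt x.1 i = some (μ.edges[i]'h) :=
  mem_extends_iff μ x.1

lemma mem_Zminus_iff {μ : Walk G} {F : Set G.E} {x : G.XB} :
    x ∈ G.Zminus μ F ↔ x ∈ G.Zset μ ∧ ∀ e ∈ F, x ∉ G.Zset ⟨μ.src, μ.edges ++ [e]⟩ := by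
  simp only [Zminus, Set.mem_diff, Set.mem_iUnion, not_exists]

/-! ### The basic sets form a basis -/

/-- The generating family of the cylinder-set topology. -/
def basics (G : EGraph) : Set (Set G.XB) :=
  {S | ∃ (μ : Walk G) (F : Set G.E), G.IsPath μ ∧ F.Finite ∧
        (∀ e ∈ F, G.s e = μ.rng) ∧ S = G.Zminus μ F}

lemma isOpen_basics {S : Set G.XB} (h : S ∈ basics G) : IsOpen S :=
  TopologicalSpace.GenerateOpen.basic S h

/-- `x` has a basic neighbourhood contained in `U`. -/
def Good (U : Set G.XB) (x : G.XB) : Prop :=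
  ∃ (μ : Walk G) (F : Set G.E), G.IsPath μ ∧ F.Finite ∧ (∀ e ∈ F, G.s e = μ.rng) ∧
    x ∈ G.Zminus μ F ∧ G.Zminus μ F ⊆ U

lemma Zset_anti {μ₁ μ₂ : Walk G} {x : G.XB} (h1 : x ∈ G.Zset μ₁) (h2 : x ∈ G.Zset μ₂)
    (hle : μ₁.edges.length ≤ μ₂.edges.length) : G.Zset μ₂ ⊆ G.Zset μ₁ := by
  intro z hz
  rw [mem_Zset_iff] at h1 h2 hz ⊢
  refine ⟨hz.1.trans (h2.1.symm.trans h1.1), fun i hi => ?_⟩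
  have hi2 : i < μ₂.edges.length := lt_of_lt_of_le hi hle
  have e1 := h1.2 i hi
  have e2 := h2.2 i hi2
  rw [e2] at e1
  rw [hz.2 i hi2, e1]

lemma not_mem_ext {μ₁ μ₂ : Walk G} {F₁ : Set G.E} {x : G.XB}
    (h1 : x ∈ G.Zminus μ₁ F₁) (h2 : x ∈ G.Zset μ₂)
    (hlt : μ₁.edges.length < μ₂.edges.length) {z : G.XB} (hz : z ∈ G.Zset μ₂) :
    ∀ e ∈ F₁, z ∉ G.Zset ⟨μ₁.src, μ₁.edges ++ [e]⟩ := by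
  intro e he hmem
  rw [mem_Zminus_iff] at h1
  apply h1.2 e he
  obtain ⟨L, hLdef⟩ : ∃ L, L = μ₁.edges.length := ⟨_, rfl⟩
  rw [← hLdef] at hlt
  -- first, `e` is the edge of `μ₂` at position `μ₁.edges.length`
  have hL1 : L < (μ₁.edges ++ [e]).length := by simp [hLdef]
  have hz1 := (mem_Zset_iff.mp hmem).2 L hL1
  have hz2 := (mem_Zset_iff.mp hz).2 L hlt
  rw [hz2] at hz1
  have he2 : (μ₁.edges ++ [e])[L]'hL1 = e := List.getElem_concat_length hLdef _
  rw [he2] at hz1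
  have hkey : μ₂.edges[L]'hlt = e := Option.some.inj hz1
  -- now show x itself lies in the forbidden cylinder
  rw [mem_Zset_iff]
  have hx1 := (mem_Zset_iff.mp h1.1)
  have hx2 := (mem_Zset_iff.mp h2)
  refine ⟨hx1.1, fun i hi => ?_⟩
  rcases Nat.lt_or_ge i L with hiL | hiL
  · have hiL2 : i < μ₁.edges.length := hLdef ▸ hiL
    have := hx1.2 i hiL2
    rw [this]
    congr 1
    exact (List.getElem_append_left hiL2).symm
  · have hiL' : i = L := by
      have : i < L + 1 := by simp only [List.length_append, List.length_singleton, ← hLdef] at hi; omega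
      omega
    subst hiL'
    have := hx2.2 i hlt
    rw [this, hkey]
    congr 1
    exact (List.getElem_concat_length hLdef _).symm

lemma Good.inter {s t : Set G.XB} {x : G.XB} (hs : Good s x) (ht : Good t x) :
    Good (s ∩ t) x := by
  have key : ∀ (s t : Set G.XB) (μ₁ : Walk G) (F₁ : Set G.E) (μ₂ : Walk G) (F₂ : Set G.E),
      G.IsPath μ₁ → F₁.Finite → (∀ e ∈ F₁, G.s e = μ₁.rng) →
      x ∈ G.Zminus μ₁ F₁ → G.Zminus μ₁ F₁ ⊆ s →
      G.IsPath μ₂ → F₂.Finite → (∀ e ∈ F₂, G.s e = μ₂.rng) →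
      x ∈ G.Zminus μ₂ F₂ → G.Zminus μ₂ F₂ ⊆ t →
      μ₁.edges.length ≤ μ₂.edges.length → Good (s ∩ t) x := by
    intro s t μ₁ F₁ μ₂ F₂ p1 f1 sc1 m1 sub1 p2 f2 sc2 m2 sub2 hle
    have mz1 : x ∈ G.Zset μ₁ := (mem_Zminus_iff.mp m1).1
    have mz2 : x ∈ G.Zset μ₂ := (mem_Zminus_iff.mp m2).1
    rcases Nat.lt_or_ge μ₁.edges.length μ₂.edges.length with hlt | hge
    · refine ⟨μ₂, F₂, p2, f2, sc2, m2, fun z hz => ?_⟩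
      have hzZ : z ∈ G.Zset μ₂ := (mem_Zminus_iff.mp hz).1
      refine ⟨sub1 ?_, sub2 hz⟩
      rw [mem_Zminus_iff]
      exact ⟨Zset_anti mz1 mz2 hle hzZ, not_mem_ext m1 mz2 hlt hzZ⟩
    · -- equal lengths, so μ₁ = μ₂
      have heq : μ₁.edges.length = μ₂.edges.length := le_antisymm hle hge
      have hedges : μ₁.edges = μ₂.edges := by
        apply List.ext_getElem heq
        intro i h1 h2
        have e1 := (mem_Zset_iff.mp mz1).2 i h1
        have e2 := (mem_Zset_iff.mp mz2).2 i h2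
        rw [e1] at e2
        exact Option.some.inj e2
      have hsrc : μ₁.src = μ₂.src :=
        ((mem_Zset_iff.mp mz1).1).symm.trans (mem_Zset_iff.mp mz2).1
      have hμ : μ₁ = μ₂ := by
        cases μ₁; cases μ₂
        simp only at hedges hsrc
        simp [hedges, hsrc]
      subst hμ
      refine ⟨μ₁, F₁ ∪ F₂, p1, f1.union f2, ?_, ?_, fun z hz => ?_⟩
      · intro e he
        rcases he with he | he
        · exact sc1 e he
        · exact sc2 e he
      · rw [mem_Zminus_iff]
        refine ⟨mz1, fun e he => ?_⟩
        rcases he with he | he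
        · exact (mem_Zminus_iff.mp m1).2 e he
        · exact (mem_Zminus_iff.mp m2).2 e he
      · rw [mem_Zminus_iff] at hz
        refine ⟨sub1 ?_, sub2 ?_⟩
        · rw [mem_Zminus_iff]
          exact ⟨hz.1, fun e he => hz.2 e (Or.inl he)⟩
        · rw [mem_Zminus_iff]
          exact ⟨hz.1, fun e he => hz.2 e (Or.inr he)⟩
  obtain ⟨μ₁, F₁, p1, f1, sc1, m1, sub1⟩ := hs
  obtain ⟨μ₂, F₂, p2, f2, sc2, m2, sub2⟩ := ht
  rcases le_total μ₁.edges.length μ₂.edges.length with h | h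
  · exact key s t μ₁ F₁ μ₂ F₂ p1 f1 sc1 m1 sub1 p2 f2 sc2 m2 sub2 h
  · rw [Set.inter_comm]
    exact key t s μ₂ F₂ μ₁ F₁ p2 f2 sc2 m2 sub2 p1 f1 sc1 m1 sub1 h

lemma good_of_generateOpen {U : Set G.XB}
    (hU' : TopologicalSpace.GenerateOpen (basics G) U) : ∀ x ∈ U, Good U x := by
  induction hU' with
  | basic S hS =>
    intro x hx
    obtain ⟨μ, F, h1, h2, h3, rfl⟩ := hS
    exact ⟨μ, F, h1, h2, h3, hx, subset_rfl⟩
  | univ =>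
    intro x _
    refine ⟨⟨G.bsrc x.1, []⟩, ∅, isPath_nil _, Set.finite_empty, by simp, ?_, fun _ _ => trivial⟩
    rw [mem_Zminus_iff]
    exact ⟨mem_Zset_iff.mpr ⟨rfl, fun i hi => absurd hi (by simp)⟩, by simp⟩
  | inter s t _ _ ihs iht =>
    intro x hx
    exact Good.inter (ihs x hx.1) (iht x hx.2)
  | sUnion S _ ih =>
    intro x hx
    obtain ⟨s, hsS, hxs⟩ := hx
    obtain ⟨μ, F, h1, h2, h3, h4, h5⟩ := ih s hsS x hxs
    exact ⟨μ, F, h1, h2, h3, h4, h5.trans (Set.subset_sUnion_of_mem hsS)⟩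

lemma exists_basic_subset {U : Set G.XB} (hU : IsOpen U) {x : G.XB} (hx : x ∈ U) :
    Good U x :=
  good_of_generateOpen hU x hx

end EGraph


namespace EGraph
variable {G : EGraph}

/-! ### Concatenation lemmas -/

lemma rng_eq_of_getLast {p : Walk G} {e : G.E} (h : p.edges.getLast? = some e) :
    p.rng = G.r e := by
  unfold Walk.rng
  rw [h]

lemma rng_eq_of_nil {p : Walk G} (h : p.edges = []) : p.rng = p.src := by
  unfold Walk.rng
  rw [h]
  rfl

lemma rng_eq_getElem {p : Walk G} {n : ℕ} (h : n + 1 = p.edges.length) :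
    p.rng = G.r (p.edges[n]'(by omega)) := by
  apply rng_eq_of_getLast
  rw [List.getLast?_eq_getElem?]
  have : p.edges.length - 1 = n := by omega
  rw [this, List.getElem?_eq_getElem (by omega)]

lemma isPath_append {π β : Walk G} (hπ : G.IsPath π) (hβ : G.IsPath β)
    (h : π.rng = β.src) : G.IsPath (π.append β) := by
  constructor
  · intro e he
    show G.s e = π.src
    cases hp : π.edges with
    | nil =>
      have hrs : π.rng = π.src := rng_eq_of_nil hp
      have : (π.append β).edges = β.edges := by simp [Walk.append, hp]
      rw [this] at he
      rw [hβ.1 e he, ← h, hrs]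
    | cons a l =>
      have : (π.append β).edges.head? = some a := by simp [Walk.append, hp]
      rw [this] at he
      cases he
      apply hπ.1
      rw [hp]
      rfl
  · show List.Chain' _ (π.edges ++ β.edges)
    rw [show @List.Chain' = @List.IsChain from rfl, List.isChain_append]
    refine ⟨hπ.2, hβ.2, fun a ha b hb => ?_⟩
    have h1 : π.rng = G.r a := rng_eq_of_getLast ha
    have h2 : G.s b = β.src := hβ.1 b hb
    rw [← h1, h2, h]

lemma rng_append {π β : Walk G} (h : π.rng = β.src) : (π.append β).rng = β.rng := by
  cases hb : β.edges with
  | nil =>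
    have h2 : β.rng = β.src := rng_eq_of_nil hb
    rw [h2, ← h]
    show Walk.rng ⟨π.src, π.edges ++ β.edges⟩ = π.rng
    rw [hb, List.append_nil]
  | cons a l =>
    have hne : β.edges ≠ [] := by rw [hb]; exact List.cons_ne_nil a l
    have h1 : (π.edges ++ β.edges).getLast? = β.edges.getLast? :=
      List.getLast?_append_of_ne_nil π.edges hne
    obtain ⟨e, he⟩ : ∃ e, β.edges.getLast? = some e := by
      rw [hb]
      exact ⟨(a :: l).getLast (List.cons_ne_nil a l), List.getLast?_eq_getLast _⟩
    show Walk.rng ⟨π.src, π.edges ++ β.edges⟩ = β.rng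
    rw [rng_eq_of_getLast (p := ⟨π.src, π.edges ++ β.edges⟩) (h1.trans he),
      rng_eq_of_getLast he]

lemma isBoundary_concatBP {π : Walk G} {p : G.BP} (hπ : G.IsPath π)
    (hmatch : π.rng = G.bsrc p) (hp : G.IsBoundary p) :
    G.IsBoundary (G.concatBP π p) := by
  cases p with
  | inl β =>
    have hβ : G.IsPath β ∧ (G.IsSink β.rng ∨ G.InfEmitter β.rng) := hp
    have hm : π.rng = β.src := hmatch
    show G.IsPath (π.append β) ∧ (G.IsSink (π.append β).rng ∨ G.InfEmitter (π.append β).rng)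
    rw [rng_append hm]
    exact ⟨isPath_append hπ hβ.1 hm, hβ.2⟩
  | inr ξ =>
    have hξ : G.IsInfPath ξ := hp
    have hm : π.rng = G.s (ξ 0) := hmatch
    show G.IsInfPath (G.concatSeq π ξ)
    intro n
    unfold concatSeq
    by_cases h1 : n + 1 < π.edges.length
    · have h0 : n < π.edges.length := by omega
      rw [dif_pos h0, dif_pos h1]
      simp only [List.get_eq_getElem]
      have := List.isChain_iff_getElem.mp hπ.2 n (by omega)
      simpa using this
    · by_cases h0 : n < π.edges.length
      · -- n + 1 = length
        have hlen : n + 1 = π.edges.length := by omega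
        rw [dif_pos h0, dif_neg h1]
        have : n + 1 - π.edges.length = 0 := by omega
        rw [this]
        simp only [List.get_eq_getElem]
        have h3 : π.rng = G.r (π.edges[n]'h0) := rng_eq_getElem hlen
        rw [← h3, hm]
      · rw [dif_neg h0, dif_neg h1]
        have e1 : n + 1 - π.edges.length = (n - π.edges.length) + 1 := by omega
        rw [e1]
        exact hξ _

lemma concatBP_nil {v : G.V} {p : G.BP} (h : G.bsrc p = v) :
    G.concatBP ⟨v, []⟩ p = p := by
  cases p with
  | inl α =>
    have : α.src = v := h
    show Sum.inl (⟨v, [] ++ α.edges⟩ : Walk G) = Sum.inl α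
    rw [List.nil_append, ← this]
  | inr ξ =>
    show Sum.inr (G.concatSeq ⟨v, []⟩ ξ) = Sum.inr ξ
    have hfun : G.concatSeq ⟨v, []⟩ ξ = ξ := by
      funext n
      show (if h : n < (List.nil (α := G.E)).length then _
        else ξ (n - (List.nil (α := G.E)).length)) = ξ n
      rw [dif_neg (by simp)]
      simp
    rw [hfun]

lemma eAt_concat_lt {π : Walk G} {p : G.BP} {i : ℕ} (h : i < π.edges.length) :
    eAt (G.concatBP π p) i = some (π.edges[i]'h) := by
  cases p with
  | inl β =>
    show (π.edges ++ β.edges)[i]? = _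
    rw [List.getElem?_append_left (by omega), List.getElem?_eq_getElem h]
  | inr ξ =>
    show some (G.concatSeq π ξ i) = _
    unfold concatSeq
    rw [dif_pos h]
    rfl

lemma bsrc_concatBP {π : Walk G} {p : G.BP} (hπ : G.IsPath π) (hne : π.edges ≠ []) :
    G.bsrc (G.concatBP π p) = π.src := by
  cases p with
  | inl β => rfl
  | inr ξ =>
    show G.s (G.concatSeq π ξ 0) = π.src
    have h0 : 0 < π.edges.length := List.length_pos_iff.mpr hne
    unfold concatSeq
    rw [dif_pos h0]
    apply hπ.1
    rw [List.head?_eq_getElem?, List.getElem?_eq_getElem h0]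
    rfl

/-! ### Walks of the form `ofFn` along an infinite path -/

lemma isPath_ofFn {ξ : ℕ → G.E} (hξ : G.IsInfPath ξ) (m : ℕ) :
    G.IsPath ⟨G.s (ξ 0), List.ofFn (fun i : Fin m => ξ i)⟩ := by
  constructor
  · intro e he
    cases m with
    | zero => simp at he
    | succ k =>
      rw [List.ofFn_succ] at he
      simp only [List.head?] at he
      cases he
      rfl
  · show List.Chain' _ _
    rw [show @List.Chain' = @List.IsChain from rfl, List.isChain_iff_getElem]
    intro i hi
    simp only [List.length_ofFn] at hi
    simp only [List.get_eq_getElem, List.getElem_ofFn]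
    exact hξ i

lemma rng_ofFn {ξ : ℕ → G.E} (hξ : G.IsInfPath ξ) (m : ℕ) :
    Walk.rng (⟨G.s (ξ 0), List.ofFn (fun i : Fin m => ξ i)⟩ : Walk G) = G.s (ξ m) := by
  cases m with
  | zero => simp [List.ofFn_zero, rng_eq_of_nil]
  | succ k =>
    have hlen : k + 1 = (List.ofFn (fun i : Fin (k+1) => ξ i)).length := by simp
    rw [rng_eq_getElem hlen]
    simp only [List.getElem_ofFn]
    exact hξ k

/-! ### Invariance lemmas -/

lemma triv_mem {U : Set G.XB} (hUi : G.InvariantX U) {x : G.XB} (hx : x ∈ U)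
    {α : Walk G} (hα : x.1 = Sum.inl α) :
    ∃ t : G.XB, t ∈ U ∧ t.1 = Sum.inl ⟨α.rng, []⟩ := by
  have hb : G.IsBoundary (Sum.inl α) := hα ▸ x.2
  have hbt : G.IsBoundary (Sum.inl (⟨α.rng, []⟩ : Walk G)) := by
    refine ⟨isPath_nil _, ?_⟩
    rw [rng_nil]
    exact hb.2
  refine ⟨⟨Sum.inl ⟨α.rng, []⟩, hbt⟩, ?_, rfl⟩
  apply hUi x _ _ hx
  refine ⟨α, ⟨α.rng, []⟩, Sum.inl ⟨α.rng, []⟩, hb.1, isPath_nil _, rfl, rng_nil _, ?_, ?_⟩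
  · show x.1 = Sum.inl (⟨α.src, α.edges ++ []⟩ : Walk G)
    rw [hα, List.append_nil]
  · show Sum.inl (⟨α.rng, []⟩ : Walk G) = Sum.inl (⟨α.rng, [] ++ []⟩ : Walk G)
    rfl

lemma triv_absorb {U : Set G.XB} (hUi : G.InvariantX U) {t y : G.XB} (ht : t ∈ U)
    {v : G.V} (htv : t.1 = Sum.inl ⟨v, []⟩) {α : Walk G} (hy : y.1 = Sum.inl α)
    (hrng : α.rng = v) : y ∈ U := by
  have hby : G.IsBoundary (Sum.inl α) := hy ▸ y.2
  apply hUi t y _ ht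
  refine ⟨⟨v, []⟩, α, Sum.inl ⟨v, []⟩, isPath_nil _, hby.1, rng_nil _, hrng, ?_, ?_⟩
  · show t.1 = Sum.inl (⟨v, [] ++ []⟩ : Walk G)
    rw [htv]
    rfl
  · show y.1 = Sum.inl (⟨α.src, α.edges ++ []⟩ : Walk G)
    rw [hy, List.append_nil]

/-- THE KEY LEMMA: every infinite path in an open invariant set has a vertex on it
all of whose boundary paths lie in the set. -/
lemma key_inf {U : Set G.XB} (hUo : IsOpen U) (hUi : G.InvariantX U)
    {ξ : ℕ → G.E} (hb : G.IsBoundary (Sum.inr ξ)) (hmem : (⟨Sum.inr ξ, hb⟩ : G.XB) ∈ U) :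
    ∃ m, ∀ z : G.XB, G.bsrc z.1 = G.s (ξ m) → z ∈ U := by
  have hξ : G.IsInfPath ξ := hb
  obtain ⟨μ, F, hpath, hFfin, hFsrc, hxmem, hsub⟩ := exists_basic_subset hUo hmem
  set x : G.XB := ⟨Sum.inr ξ, hb⟩ with hxdef
  set L := μ.edges.length with hLdef
  refine ⟨L + 1, fun z hz => ?_⟩
  have hxZ : x ∈ G.Zset μ := (mem_Zminus_iff.mp hxmem).1
  have hxZ' := mem_Zset_iff.mp hxZ
  have hsrc0 : G.s (ξ 0) = μ.src := hxZ'.1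
  have hxe : ∀ i (h : i < L), μ.edges[i]'h = ξ i := by
    intro i h
    have := hxZ'.2 i h
    exact (Option.some.inj this).symm
  set π : Walk G := ⟨G.s (ξ 0), List.ofFn (fun i : Fin (L + 1) => ξ i)⟩ with hπdef
  have hππ : G.IsPath π := isPath_ofFn hξ (L + 1)
  have hπrng : π.rng = G.s (ξ (L + 1)) := rng_ofFn hξ (L + 1)
  have hπlen : π.edges.length = L + 1 := by simp [hπdef]
  have hπne : π.edges ≠ [] := by
    intro hcon
    rw [hcon] at hπlen
    simp at hπlen
  have hπe : ∀ i (h : i < L + 1), π.edges[i]'(by rw [hπlen]; omega) = ξ i := by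
    intro i h
    have : π.edges[i]'(by rw [hπlen]; omega) =
        List.get (List.ofFn (fun j : Fin (L + 1) => ξ j)) ⟨i, by simp [h]⟩ := rfl
    rw [this, List.get_ofFn]
    rfl
  have hwb : G.IsBoundary (G.concatBP π z.1) :=
    isBoundary_concatBP hππ (by rw [hπrng, hz]) z.2
  have hwZ : (⟨G.concatBP π z.1, hwb⟩ : G.XB) ∈ G.Zminus μ F := by
    apply mem_Zminus_iff.mpr
    constructor
    · apply mem_Zset_iff.mpr
      constructor
      · show G.bsrc (G.concatBP π z.1) = μ.src
        rw [bsrc_concatBP hππ hπne]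
        exact hsrc0
      · intro i hi
        have hiπ : i < π.edges.length := by rw [hπlen]; omega
        rw [eAt_concat_lt hiπ]
        congr 1
        rw [hπe i (by omega), hxe i hi]
    · intro e he hmemZ
      have hzZ := mem_Zset_iff.mp hmemZ
      have hL1 : L < (μ.edges ++ [e]).length := by simp [hLdef]
      have h1 := hzZ.2 L hL1
      have h2 : (μ.edges ++ [e])[L]'hL1 = e := List.getElem_concat_length rfl _
      rw [h2] at h1
      have hLπ : L < π.edges.length := by rw [hπlen]; omega
      rw [eAt_concat_lt hLπ] at h1
      have hkey : e = ξ L := by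
        have := hπe L (by omega)
        rw [this] at h1
        exact (Option.some.inj h1).symm
      -- then x itself would be in the forbidden cylinder
      apply (mem_Zminus_iff.mp hxmem).2 e he
      rw [mem_Zset_iff]
      refine ⟨hxZ'.1, fun i hi => ?_⟩
      show some (ξ i) = _
      have hi' : i < L + 1 := by simpa using hi
      rcases Nat.lt_or_ge i L with hiL | hiL
      · congr 1
        rw [(List.getElem_append_left hiL : (μ.edges ++ [e])[i]'hi = μ.edges[i]'hiL)]
        exact (hxe i hiL).symm
      · have : i = L := by omega
        subst this
        congr 1
        rw [List.getElem_concat_length rfl hi]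
        exact hkey.symm
  have hwU : (⟨G.concatBP π z.1, hwb⟩ : G.XB) ∈ U := hsub hwZ
  apply hUi ⟨G.concatBP π z.1, hwb⟩ z _ hwU
  refine ⟨π, ⟨G.s (ξ (L + 1)), []⟩, z.1, hππ, isPath_nil _, ?_, ?_, rfl, ?_⟩
  · rw [hπrng, hz]
  · rw [rng_nil, hz]
  · exact (concatBP_nil hz).symm

end EGraph


namespace EGraph
variable {G : EGraph}

/-! ### The finite invariants of a compact open invariant set -/

/-- Sources of boundary paths lying in `U`. -/
def srcSet (U : Set G.XB) : Set G.V := {v | ∃ x ∈ U, G.bsrc x.1 = v}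

/-- Vertices all of whose boundary paths lie in `U` (and which carry one). -/
def Hset (U : Set G.XB) : Set G.V :=
  {v | (∃ x ∈ U, G.bsrc x.1 = v) ∧ ∀ z : G.XB, G.bsrc z.1 = v → z ∈ U}

/-- Vertices whose trivial boundary path lies in `U`. -/
def Tset (U : Set G.XB) : Set G.V := {v | ∃ x ∈ U, x.1 = Sum.inl ⟨v, []⟩}

lemma srcSet_mono {U W : Set G.XB} (h : U ⊆ W) : srcSet U ⊆ srcSet W := by
  rintro v ⟨x, hx, hv⟩
  exact ⟨x, h hx, hv⟩

lemma Hset_mono {U W : Set G.XB} (h : U ⊆ W) : Hset U ⊆ Hset W := by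
  rintro v ⟨⟨x, hx, hv⟩, hall⟩
  exact ⟨⟨x, h hx, hv⟩, fun z hz => h (hall z hz)⟩

lemma Tset_mono {U W : Set G.XB} (h : U ⊆ W) : Tset U ⊆ Tset W := by
  rintro v ⟨x, hx, hv⟩
  exact ⟨x, h hx, hv⟩

lemma Hset_subset_srcSet {U : Set G.XB} : Hset U ⊆ srcSet U := fun _ hv => hv.1

lemma Tset_subset_srcSet {U : Set G.XB} : Tset U ⊆ srcSet U := by
  rintro v ⟨x, hx, hv⟩
  refine ⟨x, hx, ?_⟩
  rw [hv]
  rfl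

lemma srcSet_finite {U : Set G.XB} (hc : IsCompact U) (ho : IsOpen U) :
    (srcSet U).Finite := by
  have H : ∀ x : U, ∃ (B : Set G.XB) (v : G.V),
      IsOpen B ∧ (x : G.XB) ∈ B ∧ B ⊆ U ∧ ∀ z ∈ B, G.bsrc (z : G.XB).1 = v := by
    intro x
    obtain ⟨μ, F, h1, h2, h3, h4, h5⟩ := exists_basic_subset ho x.2
    exact ⟨G.Zminus μ F, μ.src, isOpen_basics ⟨μ, F, h1, h2, h3, rfl⟩, h4, h5,
      fun z hz => (mem_Zset_iff.mp (mem_Zminus_iff.mp hz).1).1⟩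
  choose B v hBo hBx hBU hBv using H
  obtain ⟨t, ht⟩ := hc.elim_finite_subcover B hBo
    (fun z hz => Set.mem_iUnion.mpr ⟨⟨z, hz⟩, hBx ⟨z, hz⟩⟩)
  refine Set.Finite.subset (t.finite_toSet.image v) ?_
  rintro w ⟨x, hxU, rfl⟩
  have hx2 := ht hxU
  rw [Set.mem_iUnion₂] at hx2
  obtain ⟨i, hit, hmem⟩ := hx2
  exact ⟨i, hit, (hBv i x hmem).symm⟩

/-- COMPLETENESS: the pair `(Hset, Tset)` determines an open invariant set among its
open invariant supersets. -/
lemma subset_of_HT {U W : Set G.XB} (hUi : G.InvariantX U) (hWo : IsOpen W)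
    (hWi : G.InvariantX W) (hH : Hset W ⊆ Hset U) (hT : Tset W ⊆ Tset U) : W ⊆ U := by
  intro y hy
  obtain ⟨p, hp⟩ := y
  cases p with
  | inl α =>
    obtain ⟨t, htW, hte⟩ := triv_mem hWi hy (α := α) rfl
    obtain ⟨t', ht'U, ht'e⟩ := hT ⟨t, htW, hte⟩
    exact triv_absorb hUi ht'U ht'e (α := α) rfl rfl
  | inr ξ =>
    have hinf : G.IsInfPath ξ := hp
    obtain ⟨m, hm⟩ := key_inf hWo hWi hp hy
    have htb : G.IsBoundary (Sum.inr fun i => ξ (m + i)) := by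
      intro i
      show G.r (ξ (m + i)) = G.s (ξ (m + (i + 1)))
      have h1 := hinf (m + i)
      rwa [show m + (i + 1) = (m + i) + 1 from rfl]
    set tp : G.XB := ⟨Sum.inr fun i => ξ (m + i), htb⟩ with htpdef
    have htsrc : G.bsrc tp.1 = G.s (ξ m) := by
      show G.s (ξ (m + 0)) = G.s (ξ m)
      rw [Nat.add_zero]
    have hvH : G.s (ξ m) ∈ Hset W := ⟨⟨tp, hm tp htsrc, htsrc⟩, hm⟩
    have htU : tp ∈ U := (hH hvH).2 tp htsrc
    apply hUi tp ⟨Sum.inr ξ, hp⟩ _ htU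
    refine ⟨⟨G.s (ξ m), []⟩, ⟨G.s (ξ 0), List.ofFn (fun i : Fin m => ξ i)⟩, tp.1,
      isPath_nil _, isPath_ofFn hinf m, ?_, ?_, (concatBP_nil htsrc).symm, ?_⟩
    · rw [rng_nil]
      exact htsrc.symm
    · rw [rng_ofFn hinf m]
      exact htsrc.symm
    · show Sum.inr ξ = G.concatBP ⟨G.s (ξ 0), List.ofFn (fun i : Fin m => ξ i)⟩ tp.1
      show Sum.inr ξ = Sum.inr (G.concatSeq _ (fun i => ξ (m + i)))
      congr 1
      funext n
      unfold concatSeq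
      by_cases hn : n < (List.ofFn (fun i : Fin m => ξ i)).length
      · rw [dif_pos hn, List.get_ofFn]
        rfl
      · rw [dif_neg hn]
        have hn' : m ≤ n := by simpa using hn
        have hlen : (List.ofFn (fun i : Fin m => ξ i)).length = m := by simp
        rw [hlen]
        congr 1
        omega

end EGraph


/-- the compact open invariant subsets of the unit space of the graph
groupoid satisfy the descending chain condition, and every nonempty one contains a
minimal one. -/
theorem coi_dcc_and_minimal (G : EGraph) :
    (∀ ch : ℕ → Set G.XB, (∀ n, G.COI (ch n)) → (∀ n, ch (n + 1) ⊆ ch n) →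
        ∃ N, ∀ n, N ≤ n → ch n = ch N) ∧
      (∀ U : Set G.XB, G.COI U → U.Nonempty → ∃ V, V ⊆ U ∧ G.MinCOI V) := by
  constructor
  · intro ch hcoi hdec
    have hchain : ∀ {a b : ℕ}, a ≤ b → ch b ⊆ ch a := by
      intro a b hab
      induction hab with
      | refl => exact subset_rfl
      | step _ ih => exact (hdec _).trans ih
    have hAfin : (EGraph.srcSet (ch 0)).Finite :=
      EGraph.srcSet_finite (hcoi 0).1 (hcoi 0).2.1
    have hHfin : ∀ n, (EGraph.Hset (ch n)).Finite := fun n =>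
      hAfin.subset ((EGraph.Hset_subset_srcSet).trans (EGraph.srcSet_mono (hchain (Nat.zero_le n))))
    have hTfin : ∀ n, (EGraph.Tset (ch n)).Finite := fun n =>
      hAfin.subset ((EGraph.Tset_subset_srcSet).trans (EGraph.srcSet_mono (hchain (Nat.zero_le n))))
    set g : ℕ → ℕ := fun n => (EGraph.Hset (ch n)).ncard + (EGraph.Tset (ch n)).ncard with hg
    obtain ⟨N, hN⟩ : ∃ N, g N = sInf (Set.range g) := Nat.sInf_mem (Set.range_nonempty g)
    refine ⟨N, fun n hn => ?_⟩
    have hHsub : EGraph.Hset (ch n) ⊆ EGraph.Hset (ch N) := EGraph.Hset_mono (hchain hn)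
    have hTsub : EGraph.Tset (ch n) ⊆ EGraph.Tset (ch N) := EGraph.Tset_mono (hchain hn)
    have h1 : g n = g N := by
      have hle : g n ≤ g N :=
        add_le_add (Set.ncard_le_ncard hHsub (hHfin N)) (Set.ncard_le_ncard hTsub (hTfin N))
      have hge : g N ≤ g n := hN ▸ Nat.sInf_le ⟨n, rfl⟩
      omega
    have hc1 : (EGraph.Hset (ch n)).ncard ≤ (EGraph.Hset (ch N)).ncard :=
      Set.ncard_le_ncard hHsub (hHfin N)
    have hc2 : (EGraph.Tset (ch n)).ncard ≤ (EGraph.Tset (ch N)).ncard :=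
      Set.ncard_le_ncard hTsub (hTfin N)
    have hg1 : (EGraph.Hset (ch N)).ncard + (EGraph.Tset (ch N)).ncard
        = (EGraph.Hset (ch n)).ncard + (EGraph.Tset (ch n)).ncard := h1.symm
    have hHeq : EGraph.Hset (ch n) = EGraph.Hset (ch N) :=
      Set.eq_of_subset_of_ncard_le hHsub (by omega) (hHfin N)
    have hTeq : EGraph.Tset (ch n) = EGraph.Tset (ch N) :=
      Set.eq_of_subset_of_ncard_le hTsub (by omega) (hTfin N)
    have hsub2 : ch N ⊆ ch n :=
      EGraph.subset_of_HT (hcoi n).2.2 (hcoi N).2.1 (hcoi N).2.2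
        (hHeq ▸ subset_rfl) (hTeq ▸ subset_rfl)
    exact Set.Subset.antisymm (hchain hn) hsub2
  · intro U hU hne
    have hAfin : (EGraph.srcSet U).Finite := EGraph.srcSet_finite hU.1 hU.2.1
    set K : Set ℕ := {k | ∃ V : Set G.XB, G.COI V ∧ V.Nonempty ∧ V ⊆ U ∧
      (EGraph.Hset V).ncard + (EGraph.Tset V).ncard = k} with hK
    have hKne : K.Nonempty := ⟨_, U, hU, hne, subset_rfl, rfl⟩
    obtain ⟨V, hV, hVne, hVU, hVk⟩ := Nat.sInf_mem hKne
    refine ⟨V, hVU, hV, hVne, ?_⟩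
    intro W hW hWV
    by_cases hWe : W = ∅
    · exact Or.inl hWe
    right
    have hWne : W.Nonempty := Set.nonempty_iff_ne_empty.mpr hWe
    have hWU : W ⊆ U := hWV.trans hVU
    have hk : sInf K ≤ (EGraph.Hset W).ncard + (EGraph.Tset W).ncard :=
      Nat.sInf_le ⟨W, hW, hWne, hWU, rfl⟩
    have hHVfin : (EGraph.Hset V).Finite :=
      hAfin.subset ((EGraph.Hset_subset_srcSet).trans (EGraph.srcSet_mono hVU))
    have hTVfin : (EGraph.Tset V).Finite :=
      hAfin.subset ((EGraph.Tset_subset_srcSet).trans (EGraph.srcSet_mono hVU))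
    have hHsub : EGraph.Hset W ⊆ EGraph.Hset V := EGraph.Hset_mono hWV
    have hTsub : EGraph.Tset W ⊆ EGraph.Tset V := EGraph.Tset_mono hWV
    have hc1 : (EGraph.Hset W).ncard ≤ (EGraph.Hset V).ncard :=
      Set.ncard_le_ncard hHsub hHVfin
    have hc2 : (EGraph.Tset W).ncard ≤ (EGraph.Tset V).ncard :=
      Set.ncard_le_ncard hTsub hTVfin
    have hHeq : EGraph.Hset W = EGraph.Hset V :=
      Set.eq_of_subset_of_ncard_le hHsub (by omega) hHVfin
    have hTeq : EGraph.Tset W = EGraph.Tset V :=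
      Set.eq_of_subset_of_ncard_le hTsub (by omega) hTVfin
    have hsub2 : V ⊆ W :=
      EGraph.subset_of_HT hW.2.2 hV.2.1 hV.2.2 (hHeq ▸ subset_rfl) (hTeq ▸ subset_rfl)
    exact Set.Subset.antisymm hWV hsub2
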